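/- Suppose a Markov chain {X_n} satisfies: there exist ε ∈ (0,1), η ≥ 1 and d_w > 1 such that for all x, y with d(x,y) ≤ 2r and all k ≥ 0, ℓ with k⌊r^{d_w}⌋ ≤ ℓ ≤ (k+1)⌊r^{d_w}⌋ and ℓ ≥ 4^{d_w/(d_w-1)}, P_y(max_{0≤j≤ℓ} d(x, X_j) ≤ 3ηr, d(x, X_ℓ) ≤ 2r) ≥ (ε/2)^k ∧ (ε/2). Then there exist N_0 ≥ 1 and constants C_1, C_2 > 0 such that P_x(max_{0≤j≤n} d(x, X_j) ≤ r) ≥ C_1 exp(-C_2 n / r^{d_w}) for all r ≥ N_0 and n ≥ 4^{d_w/(d_w-1)}. -/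
import Mathlib


open MeasureTheory
open scoped ENNReal

/-- Suppose a Markov chain on a connected graph satisfies: there are
`ε ∈ (0,1)` and `η ≥ 1` such that for all `x, y` with `d(x,y) ≤ 2r`, all
`r ≥ 8^{1/(d_w-1)}`, all `k ≥ 0` and `ℓ ≥ 4^{d_w/(d_w-1)}` with
`k⌊r^{d_w}⌋ ≤ ℓ ≤ (k+1)⌊r^{d_w}⌋`,
`P_y(max_{0≤j≤ℓ} d(x,X_j) ≤ 3ηr, d(x,X_ℓ) ≤ 2r) ≥ (ε/2)^k ∧ (ε/2)`.
Then there exist `N₀ ≥ 1` and `C₁, C₂ > 0` with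
`P_x(max_{0≤j≤n} d(x,X_j) ≤ r) ≥ C₁ exp(-C₂ n/r^{d_w})` for `r ≥ N₀`,
`n ≥ 4^{d_w/(d_w-1)}`. -/
theorem stmt_17 {V : Type*} [Countable V] [MeasurableSpace V] [MeasurableSingletonClass V]
    (G : SimpleGraph V) (hG : G.Connected)
    (μ : V → Measure (ℕ → V)) (hprob : ∀ x, IsProbabilityMeasure (μ x))
    (dw ε η : ℝ) (hdw : 1 < dw) (hε : 0 < ε) (hε1 : ε < 1) (hη : 1 ≤ η)
    (hyp : ∀ x y, ∀ r : ℕ, (8 : ℝ) ^ (1 / (dw - 1)) ≤ (r : ℝ) →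
      (G.dist x y : ℝ) ≤ 2 * r → ∀ k ℓ : ℕ,
      (4 : ℝ) ^ (dw / (dw - 1)) ≤ (ℓ : ℝ) →
      k * ⌊(r : ℝ) ^ dw⌋₊ ≤ ℓ → ℓ ≤ (k + 1) * ⌊(r : ℝ) ^ dw⌋₊ →
      ENNReal.ofReal (min ((ε / 2) ^ k) (ε / 2))
        ≤ μ y {ω | (∀ j ≤ ℓ, (G.dist x (ω j) : ℝ) ≤ 3 * η * r) ∧
            (G.dist x (ω ℓ) : ℝ) ≤ 2 * r}) :
    ∃ N₀ : ℕ, 1 ≤ N₀ ∧ ∃ C₁ > (0 : ℝ), ∃ C₂ > (0 : ℝ),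
      ∀ x, ∀ r : ℕ, N₀ ≤ r → ∀ n : ℕ, (4 : ℝ) ^ (dw / (dw - 1)) ≤ (n : ℝ) →
        ENNReal.ofReal (C₁ * Real.exp (-C₂ * n / (r : ℝ) ^ dw))
          ≤ μ x {ω | ∀ j ≤ n, (G.dist x (ω j) : ℝ) ≤ (r : ℝ)} := by
  have hdw1 : (0:ℝ) < dw - 1 := by linarith
  have hdw0 : (0:ℝ) < dw := by linarith
  have hη0 : (0:ℝ) < η := lt_of_lt_of_le one_pos hη
  set A : ℝ := (8:ℝ) ^ (1 / (dw - 1)) with hA_def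
  have hA1 : 1 < A := by
    rw [hA_def]
    refine (Real.one_lt_rpow_iff_of_pos (by norm_num)).mpr (Or.inl ⟨by norm_num, by positivity⟩)
  have hA0 : 0 < A := lt_trans one_pos hA1
  have hε2 : (0:ℝ) < ε / 2 := by linarith
  have hε2' : ε / 2 < 1 := by linarith
  set L : ℝ := Real.log (2 / ε) with hL_def
  have hL : 0 < L := Real.log_pos (by rw [lt_div_iff₀ hε]; linarith)
  refine ⟨⌈3*η*(A+1) + 6*η⌉₊ + 1, le_add_self, ε/2, hε2, 2 * (6*η)^dw * L,
    by positivity, ?_⟩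
  intro x r hr n hn
  have hrv : 3*η*(A+1) + 6*η ≤ (r:ℝ) := by
    calc 3*η*(A+1) + 6*η ≤ (⌈3*η*(A+1) + 6*η⌉₊ : ℝ) := Nat.le_ceil _
    _ ≤ (r:ℝ) := by exact_mod_cast le_trans (Nat.le_succ _) hr
  have hr6 : 6*η ≤ (r:ℝ) := by nlinarith
  have hrA1 : A + 1 ≤ (r:ℝ) / (3*η) := by
    rw [le_div_iff₀ (by positivity)]; nlinarith
  set r' : ℕ := ⌊(r:ℝ) / (3*η)⌋₊ with hr'_def
  have hr'le : (r':ℝ) ≤ (r:ℝ) / (3*η) := Nat.floor_le (by positivity)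
  have hr'A : A ≤ (r':ℝ) := by
    have := Nat.sub_one_lt_floor ((r:ℝ) / (3*η))
    have : (r:ℝ)/(3*η) - 1 < (r':ℝ) := this
    linarith
  have hr'half : (r:ℝ) / (6*η) ≤ (r':ℝ) := by
    have h1 : (1:ℝ) ≤ (r:ℝ)/(6*η) := (le_div_iff₀ (by positivity)).mpr (by linarith)
    have h2 : (r:ℝ)/(3*η) = (r:ℝ)/(6*η) + (r:ℝ)/(6*η) := by field_simp; ring
    have := Nat.sub_one_lt_floor ((r:ℝ) / (3*η))
    have h3 : (r:ℝ)/(3*η) - 1 < (r':ℝ) := this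
    linarith
  have hr'0 : (0:ℝ) < (r':ℝ) := lt_of_lt_of_le hA0 hr'A
  set t : ℝ := (r':ℝ) ^ dw with ht_def
  have ht8 : 8 ≤ t := by
    have h1 : A ^ dw ≤ t := Real.rpow_le_rpow (le_of_lt hA0) hr'A (le_of_lt hdw0)
    have h2 : A ^ dw = (8:ℝ) ^ (1/(dw-1) * dw) := by
      rw [hA_def, ← Real.rpow_mul (by norm_num)]
    have h3 : (1:ℝ) ≤ 1/(dw-1) * dw := by
      rw [div_mul_eq_mul_div, one_mul, le_div_iff₀ hdw1]; linarith
    have h4 : (8:ℝ) ^ (1:ℝ) ≤ (8:ℝ) ^ (1/(dw-1) * dw) :=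
      Real.rpow_le_rpow_of_exponent_le (by norm_num) h3
    rw [Real.rpow_one] at h4
    linarith [h4, h1, h2.le, h2.ge]
  set m : ℕ := ⌊t⌋₊ with hm_def
  have hm8 : (8:ℕ) ≤ m := Nat.le_floor (by exact_mod_cast ht8)
  have hm0 : 0 < m := lt_of_lt_of_le (by norm_num) hm8
  have hm_half : t / 2 ≤ (m:ℝ) := by
    have := Nat.sub_one_lt_floor t
    have h3 : t - 1 < (m:ℝ) := this
    linarith
  have hm0' : (0:ℝ) < (m:ℝ) := by exact_mod_cast hm0
  set k : ℕ := n / m with hk_def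
  have hkm : k * m ≤ n := Nat.div_mul_le_self n m
  have hn_le : n ≤ (k + 1) * m := by
    refine le_of_lt ((Nat.div_lt_iff_lt_mul hm0).mp ?_)
    rw [hk_def]
    exact Nat.lt_succ_self _
  -- bound on k
  have hn0 : (0:ℝ) ≤ (n:ℝ) := Nat.cast_nonneg n
  have hk1 : (k:ℝ) ≤ (n:ℝ) / (m:ℝ) := by
    rw [le_div_iff₀ hm0']
    exact_mod_cast hkm
  have hk2 : (n:ℝ) / (m:ℝ) ≤ (n:ℝ) / (t/2) := by
    apply div_le_div_of_nonneg_left hn0 (by linarith) hm_half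
  have ht_rdw : (r:ℝ)^dw / (6*η)^dw ≤ t := by
    have h1 : ((r:ℝ)/(6*η)) ^ dw ≤ t :=
      Real.rpow_le_rpow (by positivity) hr'half (le_of_lt hdw0)
    rwa [Real.div_rpow (Nat.cast_nonneg r) (by positivity)] at h1
  have hr0 : (0:ℝ) < (r:ℝ) := by
    have : (0:ℝ) < 6*η := by positivity
    linarith
  have hrdw0 : (0:ℝ) < (r:ℝ)^dw := Real.rpow_pos_of_pos hr0 dw
  have h6η0 : (0:ℝ) < (6*η)^dw := Real.rpow_pos_of_pos (by positivity) dw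
  have hk3 : (n:ℝ) / (t/2) ≤ 2 * (6*η)^dw * (n:ℝ) / (r:ℝ)^dw := by
    rw [div_div_eq_mul_div]
    rw [div_le_div_iff₀ (by linarith) hrdw0]
    have h1 : (r:ℝ)^dw ≤ (6*η)^dw * t := by
      rw [div_le_iff₀ h6η0] at ht_rdw; linarith [ht_rdw]
    nlinarith
  have hk4 : (k:ℝ) ≤ 2 * (6*η)^dw * (n:ℝ) / (r:ℝ)^dw := le_trans hk1 (le_trans hk2 hk3)
  -- exponential bound
  have hexp : Real.exp (-(2 * (6*η)^dw * L) * n / (r:ℝ)^dw) ≤ (ε/2)^k := by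
    have hlog : Real.log (ε/2) = -L := by
      rw [hL_def, ← Real.log_inv]
      norm_num
    have heq : (ε/2:ℝ)^k = Real.exp ((k:ℝ) * Real.log (ε/2)) := by
      rw [← Real.log_pow, Real.exp_log (by positivity)]
    rw [heq]
    apply Real.exp_le_exp.mpr
    rw [hlog]
    have heq2 : -(2 * (6*η)^dw * L) * (n:ℝ) / (r:ℝ)^dw
        = -(L * (2 * (6*η)^dw * (n:ℝ) / (r:ℝ)^dw)) := by ring
    rw [heq2]
    have h5 := mul_le_mul_of_nonneg_left hk4 hL.le
    calc -(L * (2 * (6*η)^dw * (n:ℝ) / (r:ℝ)^dw)) ≤ -(L * (k:ℝ)) := neg_le_neg h5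
      _ = (k:ℝ) * -L := by ring
  -- min bound
  have hmin : ε/2 * ((ε/2)^k) ≤ min ((ε/2)^k) (ε/2) := by
    apply le_min
    · exact mul_le_of_le_one_left (by positivity) (le_of_lt hε2')
    · exact mul_le_of_le_one_right (le_of_lt hε2) (pow_le_one₀ (le_of_lt hε2) (le_of_lt hε2'))
  have hfinal : ε/2 * Real.exp (-(2 * (6*η)^dw * L) * n / (r:ℝ)^dw)
      ≤ min ((ε/2)^k) (ε/2) := by
    refine le_trans ?_ hmin
    exact mul_le_mul_of_nonneg_left hexp (le_of_lt hε2)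
  -- apply hypothesis
  have hdist : (G.dist x x : ℝ) ≤ 2 * (r':ℝ) := by
    rw [SimpleGraph.dist_self]
    push_cast
    positivity
  have happ := hyp x x r' hr'A hdist k n hn hkm hn_le
  refine le_trans (le_trans (ENNReal.ofReal_le_ofReal hfinal) happ) (measure_mono ?_)
  intro ω hω j hj
  have h1 := hω.1 j hj
  have h2 : 3 * η * (r':ℝ) ≤ (r:ℝ) := by
    calc 3 * η * (r':ℝ) ≤ 3 * η * ((r:ℝ)/(3*η)) := by
          apply mul_le_mul_of_nonneg_left hr'le (by positivity)
    _ = (r:ℝ) := by field_simp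
  linarith
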